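/- Let (α_n) and (β_n) be sequences of positive real numbers such that α_n → 0 and β_n → ∞, with (β_n) monotonically increasing. Then there exists a sequence (α_n') of positive real numbers such that: (1) α_n' ≥ α_n for all n; (2) (α_n') is decreasing and converges to 0; (3) the sequence (α_n' β_n) is non-decreasing. -/

import Mathlib

open Filter

noncomputable def gseq (α : ℕ → ℝ) (n : ℕ) : ℝ := ⨆ k, α (n + k)

noncomputable def dseq (γ β : ℕ → ℝ) : ℕ → ℝ
  | 0 => γ 0
  | 1 => γ 1
  | (n+2) => max (γ (n+2)) (dseq γ β (n+1) * β (n+1) / β (n+2))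

theorem stmt0 (α β : ℕ → ℝ) (hαpos : ∀ n ≥ 1, 0 < α n) (hβpos : ∀ n ≥ 1, 0 < β n)
    (hα : Tendsto α atTop (nhds 0)) (hβmono : ∀ n ≥ 1, β n ≤ β (n + 1))
    (hβ : Tendsto β atTop atTop) :
    ∃ α' : ℕ → ℝ, (∀ n ≥ 1, 0 < α' n) ∧ (∀ n ≥ 1, α n ≤ α' n) ∧
      (∀ n ≥ 1, α' (n + 1) ≤ α' n) ∧ Tendsto α' atTop (nhds 0) ∧
      (∀ n ≥ 1, α' n * β n ≤ α' (n + 1) * β (n + 1)) := by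
  have hb : BddAbove (Set.range α) := hα.bddAbove_range
  have hbdd : ∀ n, BddAbove (Set.range fun k => α (n + k)) := by
    intro n
    refine hb.mono ?_
    rintro x ⟨k, rfl⟩
    exact ⟨n + k, rfl⟩
  set γ := gseq α with hγdef
  have hγge : ∀ n, α n ≤ γ n := by
    intro n
    simpa [hγdef, gseq] using le_ciSup (hbdd n) 0
  have hγanti : ∀ n, γ (n + 1) ≤ γ n := by
    intro n
    refine ciSup_le fun k => ?_
    have := le_ciSup (hbdd n) (1 + k)
    simpa [hγdef, gseq, add_assoc] using this
  have hγanti' : ∀ m n, m ≤ n → γ n ≤ γ m := by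
    intro m n hmn
    induction n with
    | zero => simpa [Nat.le_zero.mp hmn]
    | succ n ih =>
      rcases Nat.lt_or_ge m (n + 1) with h | h
      · exact (hγanti n).trans (ih (Nat.lt_succ_iff.mp h))
      · have : m = n + 1 := le_antisymm hmn h
        simp [this]
  have hγpos : ∀ n ≥ 1, 0 < γ n := fun n hn => (hαpos n hn).trans_le (hγge n)
  -- γ tends to 0
  have hγle : ∀ ε > 0, ∃ N, ∀ n ≥ N, γ n ≤ ε := by
    intro ε hε
    have := (Metric.tendsto_atTop.mp hα) ε hε
    obtain ⟨N, hN⟩ := this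
    refine ⟨N, fun n hn => ?_⟩
    refine ciSup_le fun k => ?_
    have := hN (n + k) (hn.trans (Nat.le_add_right _ _))
    rw [Real.dist_eq, sub_zero] at this
    exact (le_abs_self _).trans this.le
  set δ := dseq γ β with hδdef
  have hδge : ∀ n ≥ 1, γ n ≤ δ n := by
    intro n hn
    match n, hn with
    | 1, _ => simp [hδdef, dseq]
    | (n+2), _ => exact le_max_left _ _ |>.trans_eq (by rw [hδdef]; rfl) |>.trans_eq rfl
  have hδpos : ∀ n ≥ 1, 0 < δ n := fun n hn => (hγpos n hn).trans_le (hδge n hn)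
  have hδrec : ∀ n ≥ 1, δ (n + 1) = max (γ (n + 1)) (δ n * β n / β (n + 1)) := by
    intro n hn
    match n, hn with
    | (n+1), _ => rfl
  have hδdec : ∀ n ≥ 1, δ (n + 1) ≤ δ n := by
    intro n hn
    rw [hδrec n hn]
    refine max_le ((hγanti n).trans (hδge n hn)) ?_
    rw [div_le_iff₀ (hβpos (n + 1) (by omega))]
    exact mul_le_mul_of_nonneg_left (hβmono n hn) (hδpos n hn).le
  have hδprod : ∀ n ≥ 1, δ n * β n ≤ δ (n + 1) * β (n + 1) := by
    intro n hn
    have h1 : δ n * β n / β (n + 1) ≤ δ (n + 1) := (hδrec n hn) ▸ le_max_right _ _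
    have hβ1 : (0:ℝ) < β (n + 1) := hβpos (n + 1) (by omega)
    calc δ n * β n = δ n * β n / β (n + 1) * β (n + 1) := by field_simp
    _ ≤ δ (n + 1) * β (n + 1) := mul_le_mul_of_nonneg_right h1 hβ1.le
  -- key bound
  have hkey : ∀ m ≥ 1, ∀ n, m ≤ n → δ n ≤ max (γ m) (δ m * β m / β n) := by
    intro m hm n hmn
    induction n with
    | zero => omega
    | succ n ih =>
      rcases Nat.lt_or_ge m (n + 1) with h | h
      · have hn1 : 1 ≤ n := by omega
        have ihn := ih (by omega)
        rw [hδrec n hn1]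
        have hβn : (0:ℝ) < β n := hβpos n hn1
        have hβn1 : (0:ℝ) < β (n + 1) := hβpos (n + 1) (by omega)
        refine max_le ((hγanti' m (n + 1) (by omega)).trans (le_max_left _ _)) ?_
        have h2 : δ n * β n ≤ max (γ m * β n) (δ m * β m) := by
          calc δ n * β n ≤ max (γ m) (δ m * β m / β n) * β n :=
                mul_le_mul_of_nonneg_right ihn hβn.le
          _ = max (γ m * β n) (δ m * β m / β n * β n) := by
                rw [max_mul_of_nonneg _ _ hβn.le]
          _ = max (γ m * β n) (δ m * β m) := by
                rw [div_mul_cancel₀ _ hβn.ne']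
        calc δ n * β n / β (n + 1) ≤ max (γ m * β n) (δ m * β m) / β (n + 1) := by
              gcongr
        _ = max (γ m * β n / β (n + 1)) (δ m * β m / β (n + 1)) := by
              rw [max_div_div_right hβn1.le]
        _ ≤ max (γ m) (δ m * β m / β (n + 1)) := by
              refine max_le_max ?_ le_rfl
              rw [div_le_iff₀ hβn1]
              exact mul_le_mul_of_nonneg_left (hβmono n hn1) (hγpos m hm).le
        _ ≤ max (γ m) (δ m * β m / β (n + 1)) := le_rfl
      · have hm' : m = n + 1 := le_antisymm hmn h
        rw [← hm']
        have : δ m * β m / β m = δ m := by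
          rw [mul_div_assoc, div_self (hβpos m hm).ne', mul_one]
        rw [this]
        exact le_max_right _ _
  -- tendsto
  have hδ0 : Tendsto δ atTop (nhds 0) := by
    rw [Metric.tendsto_atTop]
    intro ε hε
    obtain ⟨M, hM⟩ := hγle (ε / 2) (by positivity)
    set m := max M 1 with hm
    have hm1 : 1 ≤ m := le_max_right _ _
    have hγm : γ m ≤ ε / 2 := hM m (le_max_left _ _)
    -- choose N with β n ≥ 2 * (δ m * β m) / ε for n ≥ N
    obtain ⟨N, hN⟩ := Filter.eventually_atTop.mp (hβ.eventually_ge_atTop (2 * (δ m * β m) / ε + 1))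
    refine ⟨max m N, fun n hn => ?_⟩
    have hnm : m ≤ n := le_trans (le_max_left _ _) hn
    have hnN : N ≤ n := le_trans (le_max_right _ _) hn
    have hβn : 2 * (δ m * β m) / ε + 1 ≤ β n := hN n hnN
    have hβnpos : (0:ℝ) < β n := hβpos n (le_trans hm1 hnm)
    have hpos : 0 < δ m * β m := mul_pos (hδpos m hm1) (hβpos m hm1)
    have hfrac : δ m * β m / β n ≤ ε / 2 := by
      rw [div_le_iff₀ hβnpos]
      have h2 : 2 * (δ m * β m) / ε ≤ β n := by linarith
      calc δ m * β m = ε / 2 * (2 * (δ m * β m) / ε) := by field_simp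
      _ ≤ ε / 2 * β n := by
          refine mul_le_mul_of_nonneg_left h2 (by positivity)
    have hle : δ n ≤ ε / 2 := (hkey m hm1 n hnm).trans (max_le hγm hfrac)
    have hpos' : 0 < δ n := hδpos n (le_trans hm1 hnm)
    rw [Real.dist_eq, sub_zero, abs_of_pos hpos']
    linarith
  exact ⟨δ, hδpos, fun n hn => (hγge n).trans (hδge n hn), hδdec, hδ0, hδprod⟩
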